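/- arXiv:2604.17069 — 8 statements merged into one kernel-verified Lean document; each statement's English description precedes it below -/
import Mathlib

section
/- If A and B are matrices in SL(2,ℤ) whose commutator has trace −2, i.e. tr(ABA⁻¹B⁻¹) = −2, then tr(A)² + tr(B)² + tr(AB)² = tr(A)·tr(B)·tr(AB). -/
/-- If `A, B ∈ SL(2, ℤ)` have commutator of trace `−2`, then
`tr(A)² + tr(B)² + tr(AB)² = tr(A)·tr(B)·tr(AB)`. -/
theorem markov_equation_from_commutator_trace
    (A B : Matrix.SpecialLinearGroup (Fin 2) ℤ)
    (h : Matrix.trace ((A * B * A⁻¹ * B⁻¹ : Matrix.SpecialLinearGroup (Fin 2) ℤ) :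
        Matrix (Fin 2) (Fin 2) ℤ) = -2) :
    (Matrix.trace (A : Matrix (Fin 2) (Fin 2) ℤ)) ^ 2
      + (Matrix.trace (B : Matrix (Fin 2) (Fin 2) ℤ)) ^ 2
      + (Matrix.trace ((A * B : Matrix.SpecialLinearGroup (Fin 2) ℤ) :
          Matrix (Fin 2) (Fin 2) ℤ)) ^ 2
    = Matrix.trace (A : Matrix (Fin 2) (Fin 2) ℤ)
        * Matrix.trace (B : Matrix (Fin 2) (Fin 2) ℤ)
        * Matrix.trace ((A * B : Matrix.SpecialLinearGroup (Fin 2) ℤ) :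
            Matrix (Fin 2) (Fin 2) ℤ) := by
  have hA : (A : Matrix (Fin 2) (Fin 2) ℤ).det = 1 := A.2
  have hB : (B : Matrix (Fin 2) (Fin 2) ℤ).det = 1 := B.2
  rw [Matrix.det_fin_two] at hA hB
  simp only [Matrix.SpecialLinearGroup.coe_mul, Matrix.SpecialLinearGroup.coe_inv,
    Matrix.adjugate_fin_two, Matrix.trace_fin_two, Matrix.mul_apply, Fin.sum_univ_two,
    Matrix.of_apply, Matrix.cons_val', Matrix.cons_val_zero, Matrix.cons_val_one,
    Matrix.head_cons, Matrix.head_fin_const, Matrix.empty_val', Matrix.cons_val_fin_one] at h ⊢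
  set a := (A : Matrix (Fin 2) (Fin 2) ℤ) 0 0
  set b := (A : Matrix (Fin 2) (Fin 2) ℤ) 0 1
  set c := (A : Matrix (Fin 2) (Fin 2) ℤ) 1 0
  set d := (A : Matrix (Fin 2) (Fin 2) ℤ) 1 1
  set e := (B : Matrix (Fin 2) (Fin 2) ℤ) 0 0
  set f := (B : Matrix (Fin 2) (Fin 2) ℤ) 0 1
  set g := (B : Matrix (Fin 2) (Fin 2) ℤ) 1 0
  set i := (B : Matrix (Fin 2) (Fin 2) ℤ) 1 1
  linear_combination h + (2 - i^2 - 2*e*i - e^2) * hA + (-(d^2) - 2*b*c - a^2) * hB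
end

section
/- Let p, q be natural numbers with 1 ≤ q, p ≤ q and gcd(p, q) = 1. Let A = !![1,1;1,2] and B = !![3,2;4,3] be 2×2 integer matrices, and for i = 1, …, q let Xᵢ = B if ⌊p·i/q⌋ − ⌊p·(i−1)/q⌋ = 1 and Xᵢ = A otherwise (the lower Christoffel word of slope p/q). Then the product C = X₁·X₂·⋯·X_q satisfies tr(C) = 3 · C₀₁, i.e. the trace of C equals three times the upper-right entry of C. -/
def chWord (p q : ℕ) : List (Matrix (Fin 2) (Fin 2) ℤ) :=
  (List.range q).map
    (fun i => if p * (i + 1) / q - p * i / q = 1 then !![3, 2; 4, 3] else !![1, 1; 1, 2])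

def Mw (p q : ℕ) : Matrix (Fin 2) (Fin 2) ℤ := (chWord p q).prod

def IsCohn (M : Matrix (Fin 2) (Fin 2) ℤ) : Prop := M.trace = 3 * M 0 1


lemma Mw_zero_one : Mw 0 1 = !![1, 1; 1, 2] := by
  simp [Mw, chWord, List.range_succ]

lemma Mw_one_one : Mw 1 1 = !![3, 2; 4, 3] := by
  simp [Mw, chWord, List.range_succ]

lemma det_prod_one (l : List (Matrix (Fin 2) (Fin 2) ℤ)) (h : ∀ x ∈ l, x.det = 1) :
    l.prod.det = 1 := by
  induction l with
  | nil => simp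
  | cons x t ih =>
      simp [Matrix.det_mul, h x (by simp), ih fun y hy => h y (by simp [hy])]

lemma det_Mw (p q : ℕ) : (Mw p q).det = 1 := by
  apply det_prod_one
  intro x hx
  simp only [chWord, List.mem_map] at hx
  obtain ⟨i, -, hi⟩ := hx
  split_ifs at hi <;> simp [← hi, Matrix.det_fin_two_of]

lemma floor_left {p q p1 q1 : ℕ} (hq1 : 1 ≤ q1) (hlt : q1 < q)
    (h : p * q1 = p1 * q + 1) {i : ℕ} (hi : i ≤ q1) :
    p * i / q = p1 * i / q1 := by
  have hq : 0 < q := lt_of_le_of_lt (Nat.zero_le _) hlt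
  set k := p1 * i / q1 with hk
  have hmod : q1 * k + p1 * i % q1 = p1 * i := Nat.div_add_mod (p1 * i) q1
  set r := p1 * i % q1 with hr
  have hrlt : r < q1 := Nat.mod_lt _ hq1
  have key : p * i * q1 = k * q * q1 + (r * q + i) := by
    have h' : (p : ℤ) * q1 = p1 * q + 1 := by exact_mod_cast h
    have e' : (q1 : ℤ) * k + r = p1 * i := by exact_mod_cast hmod
    have : (p : ℤ) * i * q1 = k * q * q1 + (r * q + i) := by
      linear_combination (i : ℤ) * h' - (q : ℤ) * e'
    exact_mod_cast this
  have hrq : (r + 1) * q ≤ q1 * q := Nat.mul_le_mul_right q hrlt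
  have hub : r * q + i < q * q1 := by nlinarith
  apply Nat.div_eq_of_lt_le
  · have h1 : k * q * q1 ≤ p * i * q1 := by omega
    exact Nat.le_of_mul_le_mul_right h1 (by omega)
  · have h1 : p * i * q1 < (k + 1) * q * q1 := by nlinarith
    exact Nat.lt_of_mul_lt_mul_right h1

lemma floor_right {p1 q1 p2 q2 : ℕ} (hq1 : 1 ≤ q1) (hq2 : 1 ≤ q2)
    (h2 : p2 * (q1 + q2) = (p1 + p2) * q2 + 1) {j : ℕ} (hj : j ≤ q2) :
    (p1 + p2) * (q1 + j) / (q1 + q2) = p1 + p2 * j / q2 := by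
  have h1 : (p1 + p2) * q1 = p1 * (q1 + q2) + 1 := by
    have hz : ((p1 : ℤ) + p2) * q1 = p1 * (q1 + q2) + 1 := by
      have h2' : (p2 : ℤ) * (q1 + q2) = ((p1 : ℤ) + p2) * q2 + 1 := by exact_mod_cast h2
      linear_combination h2'
    exact_mod_cast hz
  have hqpos : 0 < q1 + q2 := by omega
  set k := p2 * j / q2 with hk
  have hmod : q2 * k + p2 * j % q2 = p2 * j := Nat.div_add_mod (p2 * j) q2
  set r := p2 * j % q2 with hr
  have hrlt : r < q2 := Nat.mod_lt _ hq2
  have key : (p1 + p2) * (q1 + j) * q2 + j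
      = (p1 + k) * (q1 + q2) * q2 + (q2 + r * (q1 + q2)) := by
    have h1' : ((p1 : ℤ) + p2) * q1 = p1 * (q1 + q2) + 1 := by exact_mod_cast h1
    have h2' : (p2 : ℤ) * (q1 + q2) = ((p1 : ℤ) + p2) * q2 + 1 := by exact_mod_cast h2
    have e' : (q2 : ℤ) * k + r = p2 * j := by exact_mod_cast hmod
    have : ((p1 : ℤ) + p2) * (q1 + j) * q2 + j
        = ((p1 : ℤ) + k) * (q1 + q2) * q2 + (q2 + r * (q1 + q2)) := by
      linear_combination (q2 : ℤ) * h1' - (j : ℤ) * h2' - ((q1 : ℤ) + q2) * e'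
    exact_mod_cast this
  have hrq : (r + 1) * (q1 + q2) ≤ q2 * (q1 + q2) := Nat.mul_le_mul_right _ hrlt
  have hub : q2 + r * (q1 + q2) < (q1 + q2) * q2 := by nlinarith
  apply Nat.div_eq_of_lt_le
  · have hlow : (p1 + k) * (q1 + q2) * q2 ≤ (p1 + p2) * (q1 + j) * q2 := by omega
    exact Nat.le_of_mul_le_mul_right hlow (by omega)
  · have hup : (p1 + p2) * (q1 + j) * q2 < ((p1 + k) + 1) * (q1 + q2) * q2 := by nlinarith
    exact Nat.lt_of_mul_lt_mul_right hup

lemma chWord_concat {p1 q1 p2 q2 : ℕ} (hq1 : 1 ≤ q1) (hq2 : 1 ≤ q2)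
    (hdet : p2 * q1 = p1 * q2 + 1) :
    chWord (p1 + p2) (q1 + q2) = chWord p1 q1 ++ chWord p2 q2 := by
  have h1 : (p1 + p2) * q1 = p1 * (q1 + q2) + 1 := by
    have hz : ((p1 : ℤ) + p2) * q1 = p1 * (q1 + q2) + 1 := by
      have h' : (p2 : ℤ) * q1 = (p1 : ℤ) * q2 + 1 := by exact_mod_cast hdet
      linear_combination h'
    exact_mod_cast hz
  have h2 : p2 * (q1 + q2) = (p1 + p2) * q2 + 1 := by
    have hz : (p2 : ℤ) * (q1 + q2) = ((p1 : ℤ) + p2) * q2 + 1 := by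
      have h' : (p2 : ℤ) * q1 = (p1 : ℤ) * q2 + 1 := by exact_mod_cast hdet
      linear_combination h'
    exact_mod_cast hz
  unfold chWord
  rw [List.range_add, List.map_append, List.map_map]
  congr 1
  · apply List.map_congr_left
    intro i hi
    have hi' : i < q1 := List.mem_range.mp hi
    have e1 : (p1 + p2) * (i + 1) / (q1 + q2) = p1 * (i + 1) / q1 :=
      floor_left hq1 (by omega) h1 (by omega)
    have e2 : (p1 + p2) * i / (q1 + q2) = p1 * i / q1 :=
      floor_left hq1 (by omega) h1 (by omega)
    rw [e1, e2]
  · apply List.map_congr_left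
    intro j hj
    have hj' : j < q2 := List.mem_range.mp hj
    simp only [Function.comp_apply]
    have e1 : (p1 + p2) * (q1 + j + 1) / (q1 + q2) = p1 + p2 * (j + 1) / q2 := by
      have := floor_right hq1 hq2 h2 (j := j + 1) (by omega)
      rw [← this]; ring_nf
    have e2 : (p1 + p2) * (q1 + j) / (q1 + q2) = p1 + p2 * j / q2 :=
      floor_right hq1 hq2 h2 (by omega)
    rw [show q1 + j + 1 = q1 + (j + 1) from rfl] at e1 ⊢
    rw [e1, e2]
    have h3 : p1 + p2 * (j + 1) / q2 - (p1 + p2 * j / q2) = p2 * (j + 1) / q2 - p2 * j / q2 := by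
      omega
    rw [h3]

lemma Mw_concat {p1 q1 p2 q2 : ℕ} (hq1 : 1 ≤ q1) (hq2 : 1 ≤ q2)
    (hdet : p2 * q1 = p1 * q2 + 1) :
    Mw (p1 + p2) (q1 + q2) = Mw p1 q1 * Mw p2 q2 := by
  unfold Mw
  rw [chWord_concat hq1 hq2 hdet, List.prod_append]

lemma cohn_step_right (X Y : Matrix (Fin 2) (Fin 2) ℤ)
    (hX : X.trace = 3 * X 0 1) (hXY : (X * Y).trace = 3 * (X * Y) 0 1) :
    (X * Y * Y).trace = 3 * (X * Y * Y) 0 1 := by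
  simp only [Matrix.trace_fin_two, Matrix.mul_apply, Fin.sum_univ_two,
    Matrix.det_fin_two] at *
  linear_combination (Y 0 0 + Y 1 1) * hXY - (Y 0 0 * Y 1 1 - Y 0 1 * Y 1 0) * hX

lemma cohn_step_left (X Y : Matrix (Fin 2) (Fin 2) ℤ)
    (hY : Y.trace = 3 * Y 0 1) (hXY : (X * Y).trace = 3 * (X * Y) 0 1) :
    (X * (X * Y)).trace = 3 * (X * (X * Y)) 0 1 := by
  simp only [Matrix.trace_fin_two, Matrix.mul_apply, Fin.sum_univ_two,
    Matrix.det_fin_two] at *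
  linear_combination (X 0 0 + X 1 1) * hXY - (X 0 0 * X 1 1 - X 0 1 * X 1 0) * hY

lemma pair_lemma : ∀ n p1 q1 p2 q2, q1 + q2 ≤ n →
    1 ≤ q1 → 1 ≤ q2 → p1 ≤ q1 → p2 ≤ q2 → p2 * q1 = p1 * q2 + 1 →
    IsCohn (Mw p1 q1) ∧ IsCohn (Mw p2 q2) ∧ IsCohn (Mw p1 q1 * Mw p2 q2) := by
  intro n
  induction n with
  | zero => intro p1 q1 p2 q2 h; omega
  | succ n ih =>
    intro p1 q1 p2 q2 hn hq1 hq2 hp1 hp2 hdet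
    rcases lt_trichotomy q1 q2 with hlt | heq | hgt
    · -- q1 < q2 : the right fraction p2/q2 is the mediant
      have hple : p1 ≤ p2 := by
        by_contra h; push_neg at h; nlinarith
      obtain ⟨a, rfl⟩ := Nat.le.dest hple
      obtain ⟨b, rfl⟩ := Nat.le.dest hlt.le
      have hdet' : a * q1 = p1 * b + 1 := by
        have hz : ((p1 : ℤ) + a) * q1 = p1 * (q1 + b) + 1 := by exact_mod_cast hdet
        have : (a : ℤ) * q1 = p1 * b + 1 := by linear_combination hz
        exact_mod_cast this
      have hb : 1 ≤ b := by omega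
      have hsz : a ≤ b := by
        rcases Nat.lt_or_ge p1 q1 with h | h
        · by_contra hcon; push_neg at hcon; nlinarith
        · have hpq : p1 = q1 := le_antisymm hp1 h
          have hdvd : q1 ∣ 1 := by
            have d1 : q1 ∣ a * q1 := dvd_mul_left q1 a
            have d2 : q1 ∣ p1 * b := hpq ▸ dvd_mul_right q1 b
            have := Nat.dvd_sub d1 d2
            simpa [show a * q1 - p1 * b = 1 by omega] using this
          have hq11 : q1 = 1 := Nat.dvd_one.mp hdvd
          omega
      obtain ⟨T1, T2, T3⟩ := ih p1 q1 a b (by omega) hq1 hb hp1 hsz hdet'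
      have hsplit : Mw (p1 + a) (q1 + b) = Mw p1 q1 * Mw a b :=
        Mw_concat hq1 hb hdet'
      refine ⟨T1, by rw [hsplit]; exact T3, ?_⟩
      rw [hsplit]
      exact cohn_step_left _ _ T2 T3
    · -- q1 = q2 : base case (0/1, 1/1)
      subst heq
      have hdvd : q1 ∣ 1 := by
        have d1 : q1 ∣ p2 * q1 := dvd_mul_left q1 p2
        have d2 : q1 ∣ p1 * q1 := dvd_mul_left q1 p1
        have := Nat.dvd_sub d1 d2
        simpa [show p2 * q1 - p1 * q1 = 1 by omega] using this
      have hq11 : q1 = 1 := Nat.dvd_one.mp hdvd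
      subst hq11
      have hp10 : p1 = 0 := by omega
      have hp21 : p2 = 1 := by omega
      subst hp10; subst hp21
      refine ⟨?_, ?_, ?_⟩ <;>
          simp [IsCohn, Mw_zero_one, Mw_one_one, Matrix.trace_fin_two,
            Matrix.mul_fin_two]
    · -- q2 < q1 : the left fraction p1/q1 is the mediant
      have hple : p2 ≤ p1 := by
        by_contra h; push_neg at h; nlinarith
      obtain ⟨a, rfl⟩ := Nat.le.dest hple
      obtain ⟨b, rfl⟩ := Nat.le.dest hgt.le
      have hdet' : a * q2 + 1 = p2 * b := by
        have hz : (p2 : ℤ) * (q2 + b) = ((p2 : ℤ) + a) * q2 + 1 := by exact_mod_cast hdet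
        have : (a : ℤ) * q2 + 1 = p2 * b := by linear_combination - hz
        exact_mod_cast this
      have hb : 1 ≤ b := by omega
      have hsz : a ≤ b := by
        by_contra hcon; push_neg at hcon; nlinarith
      have hdet'' : p2 * b = a * q2 + 1 := hdet'.symm
      obtain ⟨T1, T2, T3⟩ := ih a b p2 q2 (by omega) hb hq2 hsz hp2 hdet''
      have hsplit : Mw (a + p2) (b + q2) = Mw a b * Mw p2 q2 :=
        Mw_concat hb hq2 hdet''
      rw [show p2 + a = a + p2 by omega, show q2 + b = b + q2 by omega]
      refine ⟨by rw [hsplit]; exact T3, T2, ?_⟩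
      rw [hsplit]
      exact cohn_step_right _ _ T1 T3

lemma Mw_cohn (p q : ℕ) (hq : 1 ≤ q) (hpq : p ≤ q) (hgcd : Nat.gcd p q = 1) :
    IsCohn (Mw p q) := by
  rcases Nat.lt_or_ge p q with hlt | hge
  · rcases Nat.lt_or_ge 1 q with hq1 | hq1
    · -- q > 1, p < q
      have hcop : Nat.Coprime p q := hgcd
      obtain ⟨m, -, hm⟩ := Nat.exists_mul_mod_eq_one_of_coprime hcop hq1
      obtain ⟨m', hm'lt, hm1⟩ : ∃ m', m' < q ∧ p * m' % q = 1 :=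
        ⟨m % q, Nat.mod_lt _ (by omega), by rw [Nat.mul_mod_mod]; exact hm⟩
      have hm'pos : 1 ≤ m' := by
        rcases Nat.eq_zero_or_pos m' with h | h
        · subst h; simp at hm1
        · exact h
      obtain ⟨k, hdm⟩ : ∃ k, q * k + 1 = p * m' :=
        ⟨p * m' / q, by have := Nat.div_add_mod (p * m') q; omega⟩
      obtain ⟨q2, hq2⟩ : ∃ q2, m' + q2 = q := ⟨q - m', by omega⟩
      have hq2pos : 1 ≤ q2 := by omega
      have hsum : p * m' + p * q2 = p * q := by
        calc p * m' + p * q2 = p * (m' + q2) := (Nat.mul_add p m' q2).symm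
          _ = p * q := by rw [hq2]
      have hkp : k ≤ p := by
        by_contra h
        push_neg at h
        nlinarith
      obtain ⟨p2, hp2⟩ : ∃ p2, k + p2 = p := ⟨p - k, by omega⟩
      have hp2q : p2 * q = p * q2 + 1 := by
        have h1 : k * q + p2 * q = p * q := by
          calc k * q + p2 * q = (k + p2) * q := (Nat.add_mul k p2 q).symm
            _ = p * q := by rw [hp2]
        have h2 : q * k = k * q := Nat.mul_comm _ _
        omega
      have hp2le : p2 ≤ q2 := by
        have h1 : p2 * q ≤ q2 * q := by nlinarith
        exact Nat.le_of_mul_le_mul_right h1 (by omega)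
      exact (pair_lemma (q + q2) p q p2 q2 (by omega) hq hq2pos hpq hp2le hp2q).1
    · -- q = 1, p = 0
      have hq1' : q = 1 := by omega
      have hp0 : p = 0 := by omega
      subst hq1'; subst hp0
      exact (pair_lemma 2 0 1 1 1 (by omega) (by omega) (by omega) (by omega)
        (by omega) (by omega)).1
  · -- p = q = 1
    have hpq' : p = q := le_antisymm hpq hge
    subst hpq'
    have : p = 1 := by simpa using hgcd
    subst this
    exact (pair_lemma 2 0 1 1 1 (by omega) (by omega) (by omega) (by omega)
      (by omega) (by omega)).2.1


/-- The product over the lower Christoffel word of slope `p/q` in the letters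
`A = !![1,1;1,2]` and `B = !![3,2;4,3]` has trace equal to three times its
upper-right entry (it is a Cohn matrix). -/
theorem christoffel_product_trace (p q : ℕ) (hq : 1 ≤ q) (hpq : p ≤ q)
    (hgcd : Nat.gcd p q = 1)
    (A B : Matrix (Fin 2) (Fin 2) ℤ)
    (hA : A = !![1, 1; 1, 2]) (hB : B = !![3, 2; 4, 3])
    (C : Matrix (Fin 2) (Fin 2) ℤ)
    (hC : C = ((List.range q).map
        (fun i => if p * (i + 1) / q - p * i / q = 1 then B else A)).prod) :
    Matrix.trace C = 3 * C 0 1 := by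
  subst hA; subst hB; subst hC
  exact Mw_cohn p q hq hpq hgcd
end

section
/- Let p, q be natural numbers with 1 ≤ q, p ≤ q and gcd(p, q) = 1. Let A = !![1,1;1,2] and B = !![3,2;4,3] be 2×2 integer matrices, and for i = 1, …, q let Xᵢ = B if ⌊p·i/q⌋ − ⌊p·(i−1)/q⌋ = 1 and Xᵢ = A otherwise (the lower Christoffel word of slope p/q). Then the upper-right entry m = C₀₁ of the product C = X₁·X₂·⋯·X_q is a Markov number: there exist positive integers y, z with m² + y² + z² = 3myz. -/
namespace ChristoffelMarkovAux

def Am : Matrix (Fin 2) (Fin 2) ℤ := !![1,1;1,2]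
def Bm : Matrix (Fin 2) (Fin 2) ℤ := !![3,2;4,3]

def tr2 (X : Matrix (Fin 2) (Fin 2) ℤ) : ℤ := X 0 0 + X 1 1

lemma mulE (X Y : Matrix (Fin 2) (Fin 2) ℤ) (i j : Fin 2) :
    (X * Y) i j = X i 0 * Y 0 j + X i 1 * Y 1 j := by
  simp [Matrix.mul_apply, Fin.sum_univ_two]

lemma sq2 (X : Matrix (Fin 2) (Fin 2) ℤ) (h : X.det = 1) :
    X * X = (X 0 0 + X 1 1) • X - 1 := by
  rw [Matrix.det_fin_two] at h
  ext i j
  simp only [Matrix.sub_apply, Matrix.smul_apply, smul_eq_mul, mulE, Matrix.one_apply]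
  fin_cases i <;> fin_cases j <;> simp <;> linarith [h]

lemma key (X Y : Matrix (Fin 2) (Fin 2) ℤ) (h : X.det = 1) :
    X * (X * Y) = tr2 X • (X * Y) - Y := by
  rw [← mul_assoc, sq2 X h, sub_mul, smul_mul_assoc, one_mul]; rfl

lemma key' (X Y : Matrix (Fin 2) (Fin 2) ℤ) (h : Y.det = 1) :
    (X * Y) * Y = tr2 Y • (X * Y) - X := by
  rw [mul_assoc, sq2 Y h, Matrix.mul_sub, Matrix.mul_smul, mul_one]; rfl

def Good (X Y : Matrix (Fin 2) (Fin 2) ℤ) : Prop :=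
  (∀ i j, 0 < X i j) ∧ (∀ i j, 0 < Y i j) ∧ X.det = 1 ∧ Y.det = 1 ∧
  tr2 X = 3 * X 0 1 ∧ tr2 Y = 3 * Y 0 1 ∧ tr2 (X*Y) = 3 * (X*Y) 0 1 ∧
  (tr2 X)^2 + (tr2 Y)^2 + (tr2 (X*Y))^2 = tr2 X * tr2 Y * tr2 (X*Y)

lemma good_base : Good Am Bm := by
  have hAB : Am * Bm = !![7,5;11,8] := by
    simp [Am, Bm, Matrix.mul_fin_two]
  refine ⟨?_, ?_, ?_, ?_, ?_, ?_, ?_, ?_⟩ <;>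
    simp [Am, Bm, hAB, tr2, Matrix.det_fin_two] <;>
    (intro i j; fin_cases i <;> fin_cases j <;> norm_num [Am, Bm])

lemma goodL {X Y : Matrix (Fin 2) (Fin 2) ℤ} (h : Good X Y) : Good X (X * Y) := by
  obtain ⟨pX, pY, dX, dY, cX, cY, cXY, fr⟩ := h
  have pXY : ∀ i j, 0 < (X * Y) i j := by
    intro i j; rw [mulE]
    exact add_pos (mul_pos (pX i 0) (pY 0 j)) (mul_pos (pX i 1) (pY 1 j))
  have hk := key X Y dX
  have htr : tr2 (X * (X * Y)) = tr2 X * tr2 (X*Y) - tr2 Y := by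
    unfold tr2
    rw [hk]
    simp only [Matrix.sub_apply, Matrix.smul_apply, smul_eq_mul]
    unfold tr2; ring
  have he : (X * (X * Y)) 0 1 = tr2 X * (X*Y) 0 1 - Y 0 1 := by
    rw [hk]
    simp only [Matrix.sub_apply, Matrix.smul_apply, smul_eq_mul]
  refine ⟨pX, pXY, dX, by rw [Matrix.det_mul, dX, dY, mul_one], cX, cXY, ?_, ?_⟩
  · rw [htr, he]; linear_combination tr2 X * cXY - cY
  · rw [htr]; linear_combination fr

lemma goodR {X Y : Matrix (Fin 2) (Fin 2) ℤ} (h : Good X Y) : Good (X * Y) Y := by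
  obtain ⟨pX, pY, dX, dY, cX, cY, cXY, fr⟩ := h
  have pXY : ∀ i j, 0 < (X * Y) i j := by
    intro i j; rw [mulE]
    exact add_pos (mul_pos (pX i 0) (pY 0 j)) (mul_pos (pX i 1) (pY 1 j))
  have hk := key' X Y dY
  have htr : tr2 ((X * Y) * Y) = tr2 Y * tr2 (X*Y) - tr2 X := by
    unfold tr2
    rw [hk]
    simp only [Matrix.sub_apply, Matrix.smul_apply, smul_eq_mul]
    unfold tr2; ring
  have he : ((X * Y) * Y) 0 1 = tr2 Y * (X*Y) 0 1 - X 0 1 := by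
    rw [hk]
    simp only [Matrix.sub_apply, Matrix.smul_apply, smul_eq_mul]
  refine ⟨pXY, pY, by rw [Matrix.det_mul, dX, dY, mul_one], dY, cXY, cY, ?_, ?_⟩
  · rw [htr, he]; linear_combination tr2 Y * cXY - cX
  · rw [htr]; linear_combination fr

/-! ### Words -/

def gen (p q : ℕ) : ℕ → ℕ → List Bool
  | 0, _ => []
  | n+1, r => decide (q ≤ r + p) :: gen p q n ((r + p) % q)

def Gm (w : List Bool) : List Bool := w.flatMap (fun b => if b then [false, true] else [false])
def Dm (w : List Bool) : List Bool := w.flatMap (fun b => if b then [true] else [false, true])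

inductive WTree : List Bool → List Bool → Prop
  | base : WTree [false] [true]
  | left {u v} : WTree u v → WTree u (u ++ v)
  | right {u v} : WTree u v → WTree (u ++ v) v

lemma Gm_append (u v : List Bool) : Gm (u ++ v) = Gm u ++ Gm v := by simp [Gm]
lemma Dm_append (u v : List Bool) : Dm (u ++ v) = Dm u ++ Dm v := by simp [Dm]

lemma wtree_G {u v : List Bool} (h : WTree u v) : WTree (Gm u) (Gm v) := by
  induction h with
  | base => exact WTree.left WTree.base
  | left _ ih => rw [Gm_append]; exact WTree.left ih
  | right _ ih => rw [Gm_append]; exact WTree.right ih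

lemma wtree_D {u v : List Bool} (h : WTree u v) : WTree (Dm u) (Dm v) := by
  induction h with
  | base => exact WTree.right WTree.base
  | left _ ih => rw [Dm_append]; exact WTree.left ih
  | right _ ih => rw [Dm_append]; exact WTree.right ih

lemma mod_sub {a Q : ℕ} (h1 : Q ≤ a) (h2 : a < 2*Q) : a % Q = a - Q := by
  rw [Nat.mod_eq_sub_mod h1, Nat.mod_eq_of_lt (by omega)]

lemma gen_count (p q : ℕ) (hp : p ≤ q) (hq : 0 < q) :
    ∀ n r, r < q → q * ((gen p q n r).count true) + (r + n * p) % q = r + n * p := by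
  intro n
  induction n with
  | zero => intro r hr; simp [gen, Nat.mod_eq_of_lt hr]
  | succ n ih =>
    intro r hr
    have ihs := ih ((r + p) % q) (Nat.mod_lt _ hq)
    rw [gen]
    have h2 : (r + (n+1) * p) % q = ((r + p) % q + n * p) % q := by
      rw [Nat.mod_add_mod]; congr 1; ring
    have h3 : r + (n+1) * p = (r + p) + n * p := by ring
    by_cases hc : q ≤ r + p
    · have hd : decide (q ≤ r + p) = true := by simpa using hc
      rw [hd]
      have hcount : (true :: gen p q n ((r+p)%q)).count true
          = (gen p q n ((r+p)%q)).count true + 1 := by simp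
      rw [hcount, Nat.mul_add, Nat.mul_one, h2]
      have h1' : (r+p) % q + q = r + p := by
        rw [mod_sub hc (by omega)]; omega
      linarith [ihs]
    · have hd : decide (q ≤ r + p) = false := by simpa using hc
      rw [hd]
      have hcount : (false :: gen p q n ((r+p)%q)).count true
          = (gen p q n ((r+p)%q)).count true := by simp
      rw [hcount, h2]
      have h1' : (r+p) % q = r + p := Nat.mod_eq_of_lt (by omega)
      linarith [ihs]

lemma gen_length (p q : ℕ) : ∀ n r, (gen p q n r).length = n := by
  intro n
  induction n with
  | zero => intro r; rfl
  | succ n ih => intro r; rw [gen]; simp [ih]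

lemma count_bool (l : List Bool) : l.count false + l.count true = l.length := by
  induction l with
  | nil => rfl
  | cons b t ih => cases b <;> simp [List.count_cons] <;> omega

lemma Gm_length (w : List Bool) : (Gm w).length = w.length + w.count true := by
  induction w with
  | nil => rfl
  | cons b t ih => cases b <;> simp [Gm, List.count_cons] at * <;> omega

lemma Dm_length (w : List Bool) : (Dm w).length = w.length + w.count false := by
  induction w with
  | nil => rfl
  | cons b t ih => cases b <;> simp [Dm, List.count_cons] at * <;> omega

lemma gblock (p q' : ℕ) (hp : 0 < p) (hpq : p < q') :
    ∀ n r, r < q' →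
      gen p (q' + p) ((Gm (gen p q' n r)).length) r = Gm (gen p q' n r) := by
  intro n
  induction n with
  | zero => intro r _; rfl
  | succ n ih =>
    intro r hr
    rw [gen]
    by_cases hc : q' ≤ r + p
    · have hd : decide (q' ≤ r + p) = true := by simpa using hc
      rw [hd]
      have hsmall : (r + p) % q' = r + p - q' := mod_sub hc (by omega)
      have hGm : Gm (true :: gen p q' n ((r+p) % q'))
          = false :: true :: Gm (gen p q' n ((r+p) % q')) := by simp [Gm]
      rw [hGm]
      have ihs := ih ((r+p) % q') (by rw [hsmall]; omega)
      simp only [List.length_cons]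
      rw [gen]
      have e1 : decide (q' + p ≤ r + p) = false := by simp; omega
      rw [e1]
      have e2 : (r + p) % (q' + p) = r + p := Nat.mod_eq_of_lt (by omega)
      rw [e2, gen]
      have e3 : decide (q' + p ≤ r + p + p) = true := by simp; omega
      rw [e3]
      have e4 : (r + p + p) % (q' + p) = r + p - q' := by
        rw [mod_sub (by omega) (by omega)]; omega
      rw [e4, ← hsmall, ihs]
    · have hd : decide (q' ≤ r + p) = false := by simpa using hc
      rw [hd]
      have hsmall : (r + p) % q' = r + p := Nat.mod_eq_of_lt (by omega)
      rw [hsmall]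
      have hGm : Gm (false :: gen p q' n (r+p))
          = false :: Gm (gen p q' n (r+p)) := by simp [Gm]
      rw [hGm]
      have ihs := ih (r+p) (by omega)
      simp only [List.length_cons]
      rw [gen]
      have e1 : decide (q' + p ≤ r + p) = false := by simp; omega
      rw [e1]
      have e2 : (r + p) % (q' + p) = r + p := Nat.mod_eq_of_lt (by omega)
      rw [e2, ihs]

lemma dblock (p₀ q₀ Q : ℕ) (hp : 0 < p₀) (hpq : p₀ < q₀) (hQ : p₀ + Q = 2 * q₀) :
    ∀ n r, r < q₀ →
      gen q₀ Q ((Dm (gen p₀ q₀ n r)).length) r = Dm (gen p₀ q₀ n r) := by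
  intro n
  induction n with
  | zero => intro r _; rfl
  | succ n ih =>
    intro r hr
    rw [gen]
    by_cases hc : q₀ ≤ r + p₀
    · have hd : decide (q₀ ≤ r + p₀) = true := by simpa using hc
      rw [hd]
      have hsmall : (r + p₀) % q₀ = r + p₀ - q₀ := mod_sub hc (by omega)
      have hDm : Dm (true :: gen p₀ q₀ n ((r+p₀) % q₀))
          = true :: Dm (gen p₀ q₀ n ((r+p₀) % q₀)) := by simp [Dm]
      rw [hDm]
      have ihs := ih ((r+p₀) % q₀) (by rw [hsmall]; omega)
      simp only [List.length_cons]
      rw [gen]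
      have e1 : decide (Q ≤ r + q₀) = true := by simp; omega
      rw [e1]
      have e2 : (r + q₀) % Q = r + p₀ - q₀ := by
        rw [mod_sub (by omega) (by omega)]; omega
      rw [e2, ← hsmall, ihs]
    · have hd : decide (q₀ ≤ r + p₀) = false := by simpa using hc
      rw [hd]
      have hsmall : (r + p₀) % q₀ = r + p₀ := Nat.mod_eq_of_lt (by omega)
      rw [hsmall]
      have hDm : Dm (false :: gen p₀ q₀ n (r+p₀))
          = false :: true :: Dm (gen p₀ q₀ n (r+p₀)) := by simp [Dm]
      rw [hDm]
      have ihs := ih (r+p₀) (by omega)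
      simp only [List.length_cons]
      rw [gen]
      have e1 : decide (Q ≤ r + q₀) = false := by simp; omega
      rw [e1]
      have e2 : (r + q₀) % Q = r + q₀ := Nat.mod_eq_of_lt (by omega)
      rw [e2, gen]
      have e3 : decide (Q ≤ r + q₀ + q₀) = true := by simp; omega
      rw [e3]
      have e4 : (r + q₀ + q₀) % Q = r + p₀ := by
        rw [mod_sub (by omega) (by omega)]; omega
      rw [e4, ihs]

lemma main (q : ℕ) : ∀ p, 0 < p → p < q → Nat.gcd p q = 1 →
    ∃ u v, WTree u v ∧ gen p q q 0 = u ++ v := by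
  induction q using Nat.strong_induction_on with
  | _ q IH =>
  intro p hp hpq hgcd
  rcases lt_trichotomy (2 * p) q with h2 | h2 | h2
  · -- G case
    set q' := q - p with hq'
    have hqe : q' + p = q := by omega
    have hgcd' : Nat.gcd p q' = 1 := by
      have hd1 : Nat.gcd p q' ∣ p := Nat.gcd_dvd_left _ _
      have hd2 : Nat.gcd p q' ∣ q' := Nat.gcd_dvd_right _ _
      have hd3 : Nat.gcd p q' ∣ q := by
        have := Nat.dvd_add hd2 hd1
        rwa [hqe] at this
      have h4 := Nat.dvd_gcd hd1 hd3
      rw [hgcd] at h4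
      exact Nat.dvd_one.mp h4
    have hq' : 0 < q' := by omega
    have hpq' : p < q' := by omega
    obtain ⟨u, v, hW, hsplit⟩ := IH q' (by omega) p hp hpq' hgcd'
    have hcnt : (gen p q' q' 0).count true = p := by
      have h := gen_count p q' (le_of_lt hpq') hq' q' 0 hq'
      rw [zero_add, Nat.mul_mod_right] at h
      exact Nat.eq_of_mul_eq_mul_left hq' (by omega)
    have hlen : (Gm (gen p q' q' 0)).length = q := by
      rw [Gm_length, gen_length, hcnt]; omega
    have hb := gblock p q' hp hpq' q' 0 hq'
    rw [hlen, hqe] at hb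
    refine ⟨Gm u, Gm v, wtree_G hW, ?_⟩
    rw [hb, hsplit, Gm_append]
  · -- base case q = 2, p = 1
    have hpd : p ∣ q := ⟨2, by omega⟩
    have hp1 : p = 1 := by
      have := Nat.gcd_eq_left hpd
      omega
    have hq2 : q = 2 := by omega
    subst hp1; subst hq2
    exact ⟨[false], [true], WTree.base, by decide⟩
  · -- D case
    set p₀ := 2 * p - q with hp₀def
    set q₀ := p with hq₀def
    have hp₀ : 0 < p₀ := by omega
    have hpq₀ : p₀ < q₀ := by omega
    have hgcd₀ : Nat.gcd p₀ q₀ = 1 := by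
      have hd1 : Nat.gcd p₀ q₀ ∣ p₀ := Nat.gcd_dvd_left _ _
      have hd2 : Nat.gcd p₀ q₀ ∣ q₀ := Nat.gcd_dvd_right _ _
      have hd3 : Nat.gcd p₀ q₀ ∣ q := by
        have h2p : Nat.gcd p₀ q₀ ∣ 2 * p := hd2.mul_left 2
        have := Nat.dvd_sub h2p hd1
        rwa [show 2 * p - p₀ = q by omega] at this
      have h4 := Nat.dvd_gcd hd2 hd3
      rw [hgcd] at h4
      exact Nat.dvd_one.mp h4
    obtain ⟨u, v, hW, hsplit⟩ := IH q₀ (by omega) p₀ hp₀ hpq₀ hgcd₀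
    have hq₀pos : 0 < q₀ := by omega
    have hcnt : (gen p₀ q₀ q₀ 0).count true = p₀ := by
      have h := gen_count p₀ q₀ (le_of_lt hpq₀) hq₀pos q₀ 0 hq₀pos
      rw [zero_add, Nat.mul_mod_right] at h
      exact Nat.eq_of_mul_eq_mul_left hq₀pos (by omega)
    have hcntf : (gen p₀ q₀ q₀ 0).count false = q₀ - p₀ := by
      have := count_bool (gen p₀ q₀ q₀ 0)
      rw [hcnt, gen_length] at this
      omega
    have hlen : (Dm (gen p₀ q₀ q₀ 0)).length = q := by
      rw [Dm_length, gen_length, hcntf]; omega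
    have hb := dblock p₀ q₀ q hp₀ hpq₀ (by omega) q₀ 0 hq₀pos
    rw [hlen] at hb
    refine ⟨Dm u, Dm v, wtree_D hW, ?_⟩
    rw [hb, hsplit, Dm_append]

/-! ### Relating `gen` to the floor description -/

lemma gen_range (p q : ℕ) :
    ∀ n k, gen p q n ((p * k) % q)
      = (List.range n).map (fun i => decide (q ≤ (p * (k + i)) % q + p)) := by
  intro n
  induction n with
  | zero => intro k; rfl
  | succ n ih =>
    intro k
    rw [List.range_succ_eq_map, gen]
    have hstate : ((p * k) % q + p) % q = (p * (k+1)) % q := by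
      rw [Nat.mod_add_mod, Nat.mul_succ]
    rw [hstate, ih (k+1)]
    simp only [List.map_cons, List.map_map]
    congr 1
    apply List.map_congr_left
    intro a _
    simp only [Function.comp_apply]
    rw [show k + 1 + a = k + (a.succ) by omega]

lemma floor_iff (p q i : ℕ) (hq : 0 < q) (hpq : p < q) :
    (p * (i+1) / q - p * i / q = 1) ↔ q ≤ (p * i) % q + p := by
  have h1 : p * (i+1) = p * i + p := by ring
  have h2 : p / q = 0 := Nat.div_eq_of_lt hpq
  have h3 : p % q = p := Nat.mod_eq_of_lt hpq
  have h4 := Nat.add_div (a := p * i) (b := p) hq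
  rw [h1, h4, h2, h3]
  by_cases hc : q ≤ p * i % q + p
  · simp [hc]
  · simp [hc]

/-! ### Products of words -/

def valM (b : Bool) : Matrix (Fin 2) (Fin 2) ℤ := if b then Bm else Am

def pw (w : List Bool) : Matrix (Fin 2) (Fin 2) ℤ := (w.map valM).prod

lemma pw_append (u v : List Bool) : pw (u ++ v) = pw u * pw v := by
  simp [pw]

lemma wtree_good {u v : List Bool} (h : WTree u v) : Good (pw u) (pw v) := by
  induction h with
  | base =>
      have h1 : pw [false] = Am := by simp [pw, valM]
      have h2 : pw [true] = Bm := by simp [pw, valM]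
      rw [h1, h2]; exact good_base
  | left _ ih => rw [pw_append]; exact goodL ih
  | right _ ih => rw [pw_append]; exact goodR ih

end ChristoffelMarkovAux

open ChristoffelMarkovAux in
/-- The upper-right entry of the product over the lower Christoffel word of slope `p/q`
in the letters `A = !![1,1;1,2]` and `B = !![3,2;4,3]` is a Markov number: it is
positive and belongs to a positive integer solution of `x² + y² + z² = 3xyz`. -/
theorem christoffel_product_entry_is_markov (p q : ℕ) (hq : 1 ≤ q) (hpq : p ≤ q)
    (hgcd : Nat.gcd p q = 1)
    (A B : Matrix (Fin 2) (Fin 2) ℤ)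
    (hA : A = !![1, 1; 1, 2]) (hB : B = !![3, 2; 4, 3])
    (C : Matrix (Fin 2) (Fin 2) ℤ)
    (hC : C = ((List.range q).map
        (fun i => if p * (i + 1) / q - p * i / q = 1 then B else A)).prod) :
    0 < C 0 1 ∧ ∃ y z : ℤ, 0 < y ∧ 0 < z ∧
      (C 0 1) ^ 2 + y ^ 2 + z ^ 2 = 3 * C 0 1 * y * z := by
  have hA' : A = Am := hA
  have hB' : B = Bm := hB
  subst hA' hB' hC
  rcases Nat.eq_zero_or_pos p with hp0 | hppos
  · -- p = 0, q = 1
    subst hp0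
    have hq1 : q = 1 := by simpa using hgcd
    subst hq1
    have hl : (List.range 1).map
        (fun i => if 0 * (i + 1) / 1 - 0 * i / 1 = 1 then Bm else Am) = [Am] := by
      norm_num
    rw [hl, List.prod_singleton]
    refine ⟨by norm_num [Am], 1, 1, one_pos, one_pos, by norm_num [Am]⟩
  rcases eq_or_lt_of_le hpq with hpq' | hlt
  · -- p = q = 1
    subst hpq'
    have hp1 : p = 1 := by simpa using hgcd
    subst hp1
    have hl : (List.range 1).map
        (fun i => if 1 * (i + 1) / 1 - 1 * i / 1 = 1 then Bm else Am) = [Bm] := by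
      norm_num
    rw [hl, List.prod_singleton]
    refine ⟨by norm_num [Bm], 1, 1, one_pos, one_pos, by norm_num [Bm]⟩
  · obtain ⟨u, v, hW, hsplit⟩ := main q p hppos hlt hgcd
    have hlist : (List.range q).map
        (fun i => if p * (i + 1) / q - p * i / q = 1 then Bm else Am)
        = (gen p q q 0).map valM := by
      have h0 := gen_range p q q 0
      rw [show (p * 0) % q = 0 by simp] at h0
      rw [h0, List.map_map]
      apply List.map_congr_left
      intro i _
      simp only [Function.comp_apply, zero_add]
      by_cases hc : q ≤ (p * i) % q + p
      · rw [if_pos ((floor_iff p q i hq hlt).mpr hc)]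
        simp [valM, hc]
      · rw [if_neg (fun h => hc ((floor_iff p q i hq hlt).mp h))]
        simp [valM, hc]
    rw [hlist]
    have hprod : ((gen p q q 0).map valM).prod = pw u * pw v := by
      rw [show ((gen p q q 0).map valM).prod = pw (gen p q q 0) from rfl,
        hsplit, pw_append]
    rw [hprod]
    obtain ⟨pX, pY, dX, dY, cX, cY, cXY, fr⟩ := wtree_good hW
    have pos01 : 0 < (pw u * pw v) 0 1 := by
      rw [mulE]
      exact add_pos (mul_pos (pX 0 0) (pY 0 1)) (mul_pos (pX 0 1) (pY 1 1))
    refine ⟨pos01, (pw u) 0 1, (pw v) 0 1, pX 0 1, pY 0 1, ?_⟩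
    rw [cX, cY, cXY] at fr
    have h9 : (9:ℤ) * ((pw u * pw v) 0 1 ^ 2 + (pw u) 0 1 ^ 2 + (pw v) 0 1 ^ 2)
        = 9 * (3 * (pw u * pw v) 0 1 * (pw u) 0 1 * (pw v) 0 1) := by
      linear_combination fr
    exact mul_left_cancel₀ (by norm_num : (9:ℤ) ≠ 0) h9
end

section
/- Let w be an n×n matrix over a commutative ring that is super upper triangular, i.e. wᵢⱼ = 0 whenever i > j + 1 (0-indexed). Let C be the matrix obtained from w by negating the subdiagonal entries: Cᵢⱼ = −wᵢⱼ if i = j + 1 and Cᵢⱼ = wᵢⱼ otherwise. Then the permanent of w equals the determinant of C: perm(w) = det(C). -/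
/-- The permanent of a square matrix over a commutative ring. -/
def Matrix.perm {n : ℕ} {R : Type*} [CommRing R] (A : Matrix (Fin n) (Fin n) R) : R :=
  ∑ σ : Equiv.Perm (Fin n), ∏ i, A i (σ i)

private lemma hess_eq_id {n : ℕ} (σ : Equiv.Perm (Fin n))
    (h : ∀ i : Fin n, (i : ℕ) ≤ (σ i : ℕ)) : σ = 1 := by
  have hsum : ∑ i : Fin n, (i : ℕ) = ∑ i : Fin n, ((σ i : ℕ)) :=
    (Equiv.sum_comp σ (fun i : Fin n => (i : ℕ))).symm
  have := (Finset.sum_eq_sum_iff_of_le (fun i _ => h i)).mp hsum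
  ext i
  exact ((this i (Finset.mem_univ i)).symm : ((σ i : ℕ) = i))

private lemma sign_hess {n : ℕ} : ∀ d : ℕ, ∀ σ : Equiv.Perm (Fin n),
    (∀ i : Fin n, (i : ℕ) ≤ (σ i : ℕ) + 1) →
    (Finset.univ.filter (fun i : Fin n => (i : ℕ) = (σ i : ℕ) + 1)).card = d →
    Equiv.Perm.sign σ = (-1) ^ d := by
  intro d
  induction d with
  | zero =>
    intro σ hh hd
    have hempty := Finset.card_eq_zero.mp hd
    have h1 : ∀ i : Fin n, (i : ℕ) ≤ (σ i : ℕ) := by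
      intro i
      have hni : (i : ℕ) ≠ (σ i : ℕ) + 1 := by
        intro hcon
        have : i ∈ Finset.univ.filter (fun i : Fin n => (i : ℕ) = (σ i : ℕ) + 1) := by
          simp [hcon]
        simp [hempty] at this
      have := hh i
      omega
    rw [hess_eq_id σ h1]
    simp
  | succ d ih =>
    intro σ hh hd
    set D := Finset.univ.filter (fun i : Fin n => (i : ℕ) = (σ i : ℕ) + 1) with hD
    have hne : D.Nonempty := Finset.card_pos.mp (by omega)
    set i := D.min' hne with hi
    have hiD : i ∈ D := D.min'_mem hne
    have hival : (i : ℕ) = (σ i : ℕ) + 1 := by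
      have := Finset.mem_filter.mp hiD
      exact this.2
    set j := σ i with hj
    have hjlt : (j : ℕ) < (i : ℕ) := by omega
    have hji : j ≠ i := fun h => by rw [h] at hjlt; omega
    have hjD : j ∉ D := by
      intro hmem
      have hle : i ≤ j := D.min'_le j hmem
      rw [Fin.le_def] at hle
      omega
    have hjle : (j : ℕ) ≤ (σ j : ℕ) := by
      have h1 := hh j
      have h2 : (j : ℕ) ≠ (σ j : ℕ) + 1 := by
        intro hcon
        exact hjD (Finset.mem_filter.mpr ⟨Finset.mem_univ _, hcon⟩)
      omega
    have hσjj : (σ j : ℕ) ≠ (j : ℕ) := by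
      intro hcon
      have : σ j = j := Fin.ext hcon
      have : j = i := σ.injective (by rw [this, ← hj])
      exact hji this
    set τ := σ * Equiv.swap j i with hτ
    have hτj : τ j = j := by
      simp [hτ, Equiv.Perm.mul_apply, Equiv.swap_apply_left, ← hj]
    have hτi : τ i = σ j := by
      simp [hτ, Equiv.Perm.mul_apply, Equiv.swap_apply_right]
    have hτk : ∀ k : Fin n, k ≠ i → k ≠ j → τ k = σ k := by
      intro k hki hkj
      simp [hτ, Equiv.Perm.mul_apply, Equiv.swap_apply_of_ne_of_ne hkj hki]
    have hhτ : ∀ k : Fin n, (k : ℕ) ≤ (τ k : ℕ) + 1 := by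
      intro k
      by_cases hki : k = i
      · subst hki; rw [hτi]; omega
      · by_cases hkj : k = j
        · subst hkj; rw [hτj]; omega
        · rw [hτk k hki hkj]; exact hh k
    have hDτ : Finset.univ.filter (fun k : Fin n => (k : ℕ) = (τ k : ℕ) + 1) = D.erase i := by
      ext k
      simp only [Finset.mem_filter, Finset.mem_univ, true_and, Finset.mem_erase]
      by_cases hki : k = i
      · subst hki
        rw [hτi]
        constructor
        · intro hcon; exfalso; omega
        · intro hcon; exact absurd rfl hcon.1
      · by_cases hkj : k = j
        · subst hkj
          rw [hτj]
          constructor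
          · intro hcon; omega
          · intro hcon
            exact absurd (Finset.mem_filter.mp hcon.2).2 (fun h =>
              hjD (Finset.mem_filter.mpr ⟨Finset.mem_univ _, h⟩))
        · rw [hτk k hki hkj]
          constructor
          · intro hcon; exact ⟨hki, Finset.mem_filter.mpr ⟨Finset.mem_univ _, hcon⟩⟩
          · intro hcon; exact (Finset.mem_filter.mp hcon.2).2
    have hcard : (Finset.univ.filter (fun k : Fin n => (k : ℕ) = (τ k : ℕ) + 1)).card = d := by
      rw [hDτ, Finset.card_erase_of_mem hiD, hd]
      omega
    have hsτ := ih τ hhτ hcard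
    have : Equiv.Perm.sign σ = Equiv.Perm.sign τ * Equiv.Perm.sign (Equiv.swap j i) := by
      rw [hτ]
      simp [Equiv.Perm.sign_mul, mul_comm, mul_assoc, Equiv.Perm.sign_swap hji]
    rw [this, hsτ, Equiv.Perm.sign_swap hji, pow_succ]

/-- For a super upper triangular matrix `w` (i.e. `wᵢⱼ = 0` for `i > j + 1`), the
permanent of `w` equals the determinant of the matrix obtained from `w` by negating
the subdiagonal entries. -/
theorem perm_eq_det_of_superUpperTriangular {n : ℕ} {R : Type*} [CommRing R]
    (w : Matrix (Fin n) (Fin n) R)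
    (hsup : ∀ i j : Fin n, (j : ℕ) + 1 < (i : ℕ) → w i j = 0)
    (C : Matrix (Fin n) (Fin n) R)
    (hC : C = Matrix.of fun i j : Fin n =>
      if (i : ℕ) = (j : ℕ) + 1 then -w i j else w i j) :
    Matrix.perm w = Matrix.det C := by
  subst hC
  rw [← Matrix.det_transpose, Matrix.det_apply']
  unfold Matrix.perm
  apply Finset.sum_congr rfl
  intro σ _
  simp only [Matrix.transpose_apply, Matrix.of_apply]
  by_cases hh : ∀ i : Fin n, (i : ℕ) ≤ (σ i : ℕ) + 1
  · set d := (Finset.univ.filter (fun i : Fin n => (i : ℕ) = (σ i : ℕ) + 1)).card with hd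
    have hsign := sign_hess d σ hh hd.symm
    have hprod : (∏ i : Fin n, if (i : ℕ) = (σ i : ℕ) + 1 then -w i (σ i) else w i (σ i))
        = (-1 : R) ^ d * ∏ i : Fin n, w i (σ i) := by
      have : ∀ i : Fin n, (if (i : ℕ) = (σ i : ℕ) + 1 then -w i (σ i) else w i (σ i))
          = (if (i : ℕ) = (σ i : ℕ) + 1 then (-1 : R) else 1) * w i (σ i) := by
        intro i; split_ifs <;> ring
      rw [Finset.prod_congr rfl (fun i _ => this i), Finset.prod_mul_distrib]
      congr 1
      rw [Finset.prod_ite, Finset.prod_const, Finset.prod_const, one_pow, mul_one, hd]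
    rw [hprod, hsign]
    push_cast
    ring_nf
    have h2 : (-1 : R) ^ (d * 2) = 1 := by rw [pow_mul', neg_one_sq, one_pow]
    rw [h2, mul_one]
  · push_neg at hh
    obtain ⟨i, hi⟩ := hh
    have hw : w i (σ i) = 0 := hsup i (σ i) hi
    rw [Finset.prod_eq_zero (Finset.mem_univ i) hw,
      Finset.prod_eq_zero (Finset.mem_univ i) (by simp [hw])]
    ring
end

section
/- Let w be an n×n matrix over a commutative ring that is super upper triangular with unit subdiagonal, i.e. wᵢⱼ = 0 whenever i > j + 1 and w_{j+1,j} = 1 for all 0 ≤ j ≤ n−2 (0-indexed). For 0 ≤ k ≤ n let P_k denote the permanent of the top-left k×k submatrix of w, with P₀ = 1. Then for every 1 ≤ k ≤ n, the permanents satisfy the recursion P_k = Σ_{i=0}^{k−1} w_{i,k−1} · P_i. -/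
section aux
variable {R : Type*} [CommRing R]

lemma perm_aux_mulLeft {n : ℕ} (M : Matrix (Fin n) (Fin n) R) (c : Equiv.Perm (Fin n)) :
    ∑ σ : Equiv.Perm (Fin n), ∏ i, M i (c (σ i)) = M.perm := by
  rw [Matrix.perm]
  exact Fintype.sum_bijective (c * ·) (Group.mulLeft_bijective c) _ _ (fun σ => rfl)

lemma Matrix.perm_submatrix_rowPerm {n : ℕ} (σ : Equiv.Perm (Fin n))
    (A : Matrix (Fin n) (Fin n) R) : (A.submatrix σ id).perm = A.perm := by
  rw [Matrix.perm, Matrix.perm]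
  refine Fintype.sum_bijective (· * σ⁻¹) (Group.mulRight_bijective σ⁻¹) _ _ fun τ => ?_
  rw [← Equiv.prod_comp σ (fun i => A i ((τ * σ⁻¹) i))]
  exact Finset.prod_congr rfl fun i _ => by simp [Matrix.submatrix_apply]

theorem Matrix.perm_succ_row_zero {n : ℕ} (A : Matrix (Fin (n + 1)) (Fin (n + 1)) R) :
    A.perm = ∑ p : Fin (n + 1), A 0 p * (A.submatrix Fin.succ p.succAbove).perm := by
  rw [Matrix.perm, Finset.univ_perm_fin_succ, ← Finset.univ_product_univ]
  rw [Finset.sum_map, Finset.sum_product]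
  refine Finset.sum_congr rfl fun p _ => ?_
  induction p using Fin.cases with
  | zero =>
    rw [Matrix.perm, Finset.mul_sum]
    refine Finset.sum_congr rfl fun σ _ => ?_
    rw [Fin.prod_univ_succ]
    simp [Equiv.Perm.decomposeFin_symm_apply_zero, Equiv.Perm.decomposeFin_symm_apply_succ]
  | succ i =>
    rw [← perm_aux_mulLeft (A.submatrix Fin.succ (Fin.succ i).succAbove) i.cycleRange,
      Finset.mul_sum]
    refine Finset.sum_congr rfl fun σ _ => ?_
    rw [Fin.prod_univ_succ]
    simp only [Equiv.toEmbedding_apply, Equiv.Perm.decomposeFin_symm_apply_zero,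
      Equiv.Perm.decomposeFin_symm_apply_succ, Matrix.submatrix_apply,
      Fin.succAbove_cycleRange]

theorem Matrix.perm_succ_row_last {n : ℕ} (A : Matrix (Fin (n + 1)) (Fin (n + 1)) R) :
    A.perm = ∑ p : Fin (n + 1),
      A (Fin.last n) p * (A.submatrix Fin.castSucc p.succAbove).perm := by
  rw [← Matrix.perm_submatrix_rowPerm (Fin.revPerm : Equiv.Perm (Fin (n+1))) A,
    Matrix.perm_succ_row_zero]
  refine Finset.sum_congr rfl fun p _ => ?_
  have h2 : (A.submatrix (⇑(Fin.revPerm : Equiv.Perm (Fin (n+1)))) id).submatrix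
      Fin.succ p.succAbove
      = (A.submatrix Fin.castSucc p.succAbove).submatrix
          (⇑(Fin.revPerm : Equiv.Perm (Fin n))) id := by
    ext i j
    simp [Matrix.submatrix_apply, Fin.rev_succ]
  rw [h2, Matrix.perm_submatrix_rowPerm]
  simp [Matrix.submatrix_apply]

lemma Matrix.perm_zero (A : Matrix (Fin 0) (Fin 0) R) : A.perm = 1 := by
  simp [Matrix.perm]

lemma Matrix.perm_one (A : Matrix (Fin 1) (Fin 1) R) : A.perm = A 0 0 := by
  simp [Matrix.perm]

end aux

section main
variable {R : Type*} [CommRing R]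

lemma perm_col_recursion (n : ℕ) (w : ℕ → ℕ → R)
    (hsup : ∀ i j, i < n → j < n → j + 1 < i → w i j = 0)
    (hsub : ∀ j, j + 1 < n → w (j + 1) j = 1) :
    ∀ k, 1 ≤ k → k ≤ n → ∀ c : ℕ,
      (Matrix.of fun i j : Fin k => if (j : ℕ) = k - 1 then w i c else w i j).perm
        = ∑ i ∈ Finset.range k,
            w i c * (Matrix.of fun a b : Fin i => w (a : ℕ) (b : ℕ)).perm := by
  intro k
  induction k with
  | zero => intro h; omega
  | succ m ih =>
    intro _ hkn c
    simp only [Nat.add_sub_cancel]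
    rcases Nat.eq_zero_or_pos m with hm | hm
    · subst hm
      rw [Matrix.perm_one]
      simp [Matrix.perm_zero]
    -- m ≥ 1; write m = t + 1
    obtain ⟨t, rfl⟩ : ∃ t, m = t + 1 := ⟨m - 1, by omega⟩
    set M : Matrix (Fin (t + 2)) (Fin (t + 2)) R :=
      Matrix.of fun i j : Fin (t + 2) => if (j : ℕ) = t + 1 then w i c else w i j with hM
    rw [Matrix.perm_succ_row_last M, Fin.sum_univ_castSucc, Fin.sum_univ_castSucc]
    have hzero : ∀ p : Fin t,
        M (Fin.last (t + 1)) (Fin.castSucc (Fin.castSucc p)) *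
          (M.submatrix Fin.castSucc (Fin.castSucc (Fin.castSucc p)).succAbove).perm = 0 := by
      intro p
      have hp : ((Fin.castSucc (Fin.castSucc p) : Fin (t + 2)) : ℕ) = (p : ℕ) := rfl
      have : M (Fin.last (t + 1)) (Fin.castSucc (Fin.castSucc p)) = 0 := by
        rw [hM]
        simp only [Matrix.of_apply, hp]
        rw [if_neg (by omega)]
        exact hsup (t + 1) p (by omega) (by omega) (by omega)
      rw [this, zero_mul]
    rw [Finset.sum_eq_zero (fun p _ => hzero p), zero_add]
    -- penultimate term
    have hpen : M (Fin.last (t + 1)) (Fin.castSucc (Fin.last t)) *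
        (M.submatrix Fin.castSucc (Fin.castSucc (Fin.last t)).succAbove).perm
        = (Matrix.of fun i j : Fin (t+1) => if (j : ℕ) = t then w i c else w i j).perm := by
      have hcoef : M (Fin.last (t + 1)) (Fin.castSucc (Fin.last t)) = 1 := by
        rw [hM]
        simp only [Matrix.of_apply]
        rw [if_neg (by simp)]
        exact hsub t (by omega)
      rw [hcoef, one_mul]
      congr 1
      ext i j
      simp only [Matrix.submatrix_apply, hM, Matrix.of_apply]
      rcases Nat.lt_or_ge (j : ℕ) t with hj | hj
      · have h1 : (Fin.castSucc (Fin.last t)).succAbove j = Fin.castSucc j := by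
          apply Fin.succAbove_of_castSucc_lt
          simp [Fin.lt_iff_val_lt_val, hj]
        rw [h1]
        have : ((Fin.castSucc j : Fin (t + 2)) : ℕ) = (j : ℕ) := rfl
        rw [if_neg (by omega), if_neg (by omega)]
        simp [this]
      · have hjt : (j : ℕ) = t := by omega
        have h1 : (Fin.castSucc (Fin.last t)).succAbove j = Fin.succ j := by
          apply Fin.succAbove_of_le_castSucc
          simp [Fin.le_iff_val_le_val, hjt]
        rw [h1]
        have : ((Fin.succ j : Fin (t + 2)) : ℕ) = (j : ℕ) + 1 := rfl
        rw [if_pos (by omega), if_pos hjt]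
        rfl
    -- last term
    have hlast : M (Fin.last (t + 1)) (Fin.last (t + 1)) *
        (M.submatrix Fin.castSucc (Fin.last (t + 1)).succAbove).perm
        = w (t + 1) c * (Matrix.of fun a b : Fin (t + 1) => w (a : ℕ) (b : ℕ)).perm := by
      congr 1
      · rw [hM]; simp only [Matrix.of_apply]; rw [if_pos (by simp)]; rfl
      · congr 1
        ext i j
        simp only [Matrix.submatrix_apply, Fin.succAbove_last, hM, Matrix.of_apply]
        have : ((Fin.castSucc j : Fin (t + 2)) : ℕ) = (j : ℕ) := rfl
        rw [if_neg (by omega)]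
        simp only [this]
        rfl
    rw [hpen, hlast]
    have ih' := ih (by omega) (by omega) c
    simp only [Nat.add_sub_cancel] at ih'
    rw [ih']
    exact (Finset.sum_range_succ _ (t + 1)).symm

end main

/-- **Recursion for permanents of wug-snake weight matrices.** Let `w` be an `n×n`
matrix (given by its entry function) that is super upper triangular with unit
subdiagonal, and let `P k` be the permanent of its top-left `k×k` submatrix
(`P 0 = 1`). Then `P k = Σ_{i<k} w i (k−1) · P i` for every `1 ≤ k ≤ n`. -/
theorem perm_filtration_recursion {R : Type*} [CommRing R] (n : ℕ)
    (w : ℕ → ℕ → R)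
    (hsup : ∀ i j, i < n → j < n → j + 1 < i → w i j = 0)
    (hsub : ∀ j, j + 1 < n → w (j + 1) j = 1)
    (P : ℕ → R)
    (hP : ∀ k, P k = Matrix.perm (Matrix.of fun i j : Fin k => w i j)) :
    ∀ k, 1 ≤ k → k ≤ n → P k = ∑ i ∈ Finset.range k, w i (k - 1) * P i := by
  intro k hk1 hkn
  have key := perm_col_recursion n w hsup hsub k hk1 hkn (k - 1)
  have hmat : (Matrix.of fun i j : Fin k => if (j : ℕ) = k - 1 then w i (k - 1) else w i j)
      = Matrix.of fun i j : Fin k => w (i : ℕ) (j : ℕ) := by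
    ext i j
    simp only [Matrix.of_apply]
    split <;> simp_all
  rw [hmat] at key
  rw [hP k, key]
  exact Finset.sum_congr rfl fun i _ => by rw [hP i]
end

section
/- Let R be a commutative ring, let A be an n×n matrix over R, let P be an invertible n×n matrix over R, and let v be a vector in Rⁿ. Then the Markov–Davenport form satisfies the covariance f_{PAP⁻¹}(P·v) = det(P) · f_A(v), where P·v denotes Matrix.mulVec. -/
/-- The Markov–Davenport form of an `n×n` matrix `A`, evaluated at a vector `v`:
`f_A(v) = det[v, Av, A²v, …, A^{n−1}v]`. -/
def MDform {R : Type*} [CommRing R] {n : ℕ} (A : Matrix (Fin n) (Fin n) R)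
    (v : Fin n → R) : R :=
  Matrix.det (Matrix.of fun i j : Fin n => (A ^ (j : ℕ)).mulVec v i)

/-- **Covariance of the Markov–Davenport form:**
`f_{PAP⁻¹}(P·v) = det(P) · f_A(v)` for invertible `P`. -/
theorem MDform_conjugation_covariance {R : Type*} [CommRing R] {n : ℕ}
    (A P : Matrix (Fin n) (Fin n) R) (hP : IsUnit P.det) (v : Fin n → R) :
    MDform (P * A * P⁻¹) (P.mulVec v) = P.det * MDform A v := by
  have hPP : P⁻¹ * P = 1 := Matrix.nonsing_inv_mul P hP
  have hpow : ∀ j : ℕ, (P * A * P⁻¹) ^ j = P * A ^ j * P⁻¹ := by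
    intro j
    induction j with
    | zero => simp [Matrix.mul_nonsing_inv P hP]
    | succ k ih =>
      rw [pow_succ, pow_succ, ih]
      rw [show P * A ^ k * P⁻¹ * (P * A * P⁻¹) = P * A ^ k * (P⁻¹ * P) * A * P⁻¹ by
        simp [Matrix.mul_assoc]]
      rw [hPP]
      simp [Matrix.mul_assoc]
  unfold MDform
  have : (Matrix.of fun i j : Fin n => ((P * A * P⁻¹) ^ (j : ℕ)).mulVec (P.mulVec v) i)
      = P * (Matrix.of fun i j : Fin n => (A ^ (j : ℕ)).mulVec v i) := by
    ext i j
    rw [Matrix.mul_apply]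
    simp only [Matrix.of_apply, hpow, Matrix.mulVec, dotProduct, Matrix.mul_apply]
    have : ((P * A ^ (j : ℕ) * P⁻¹) : Matrix (Fin n) (Fin n) R).mulVec (P.mulVec v)
        = P.mulVec ((A ^ (j : ℕ)).mulVec v) := by
      rw [← Matrix.mulVec_mulVec, ← Matrix.mulVec_mulVec,
        show P⁻¹.mulVec (P.mulVec v) = v by rw [Matrix.mulVec_mulVec, hPP, Matrix.one_mulVec]]
    have h2 := congrFun this i
    simpa [Matrix.mulVec, dotProduct, Matrix.mul_apply] using h2
  rw [this, Matrix.det_mul]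
end

section
/- Let A be an n×n real matrix and let P be an n×n integer matrix with det(P) = 1 or det(P) = −1 (so that its real image P_ℝ is invertible). Then the set of absolute values of the Markov–Davenport form of P_ℝ·A·P_ℝ⁻¹ at nonzero integer vectors equals the set of absolute values of the Markov–Davenport form of A at nonzero integer vectors: { |f_{P_ℝAP_ℝ⁻¹}(u)| : u ∈ ℤⁿ, u ≠ 0 } = { |f_A(v)| : v ∈ ℤⁿ, v ≠ 0 }. In particular, the geometric Markov number inf over nonzero integer vectors of |f| is independent of the choice of integer basis. -/
lemma conj_pow_aux {n : ℕ} (P A : Matrix (Fin n) (Fin n) ℝ) (h : IsUnit P.det) (j : ℕ) :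
    (P * A * P⁻¹) ^ j = P * A ^ j * P⁻¹ := by
  induction j with
  | zero => simp [Matrix.mul_nonsing_inv P h]
  | succ k ih =>
    rw [pow_succ, pow_succ, ih]
    simp only [Matrix.mul_assoc]
    rw [Matrix.nonsing_inv_mul_cancel_left P _ h]

lemma MDform_conj {n : ℕ} (A P : Matrix (Fin n) (Fin n) ℝ) (h : IsUnit P.det)
    (w : Fin n → ℝ) :
    MDform (P * A * P⁻¹) (P.mulVec w) = P.det * MDform A w := by
  unfold MDform
  rw [← Matrix.det_mul]
  congr 1
  ext i j
  rw [Matrix.mul_apply]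
  simp only [Matrix.of_apply, conj_pow_aux P A h, Matrix.mulVec_mulVec,
    Matrix.nonsing_inv_mul_cancel_right _ _ h]
  simp [Matrix.mulVec, Matrix.mul_apply, dotProduct, Finset.mul_sum,
    Finset.sum_mul, mul_assoc]
  rw [Finset.sum_comm]

lemma cast_mulVec {n : ℕ} (P : Matrix (Fin n) (Fin n) ℤ) (v : Fin n → ℤ) :
    (fun i => ((P.mulVec v) i : ℝ)) = (P.map (Int.cast : ℤ → ℝ)).mulVec (fun i => (v i : ℝ)) := by
  ext i
  simp [Matrix.mulVec, dotProduct, Matrix.map_apply]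

/-- **Base independence of geometric Markov numbers.** For a real matrix `A` and an
integer matrix `P` with `det P = ±1`, the set of absolute values of the
Markov–Davenport form of `P_ℝ A P_ℝ⁻¹` at nonzero integer vectors equals the
corresponding set for `A`. -/
theorem MDform_values_invariant_under_integer_base_change {n : ℕ}
    (A : Matrix (Fin n) (Fin n) ℝ) (P : Matrix (Fin n) (Fin n) ℤ)
    (hP : P.det = 1 ∨ P.det = -1) :
    {r : ℝ | ∃ u : Fin n → ℤ, u ≠ 0 ∧
        r = |MDform ((P.map (Int.cast : ℤ → ℝ)) * A * (P.map (Int.cast : ℤ → ℝ))⁻¹)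
              (fun i => (u i : ℝ))|}
    = {r : ℝ | ∃ v : Fin n → ℤ, v ≠ 0 ∧
        r = |MDform A (fun i => (v i : ℝ))|} := by
  have hPu : IsUnit P.det := by
    rcases hP with h | h <;> rw [h]
    · exact isUnit_one
    · exact isUnit_one.neg
  set Pr := P.map (Int.cast : ℤ → ℝ) with hPr
  have hdetPr : Pr.det = (P.det : ℝ) := by
    rw [hPr]; simpa using ((Int.castRingHom ℝ).map_det P).symm
  have hPrU : IsUnit Pr.det := by
    rw [hdetPr]; rcases hP with h | h <;> simp [h]
  have habs : |Pr.det| = 1 := by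
    rw [hdetPr]; rcases hP with h | h <;> simp [h]
  have hQP : P⁻¹ * P = 1 := Matrix.nonsing_inv_mul P hPu
  have hPQ : P * P⁻¹ = 1 := Matrix.mul_nonsing_inv P hPu
  ext r
  simp only [Set.mem_setOf_eq]
  constructor
  · rintro ⟨u, hu, rfl⟩
    refine ⟨P⁻¹.mulVec u, ?_, ?_⟩
    · intro h0
      apply hu
      have : P.mulVec (P⁻¹.mulVec u) = 0 := by rw [h0]; simp
      rwa [Matrix.mulVec_mulVec, hPQ, Matrix.one_mulVec] at this
    · have hu' : (fun i => ((u i : ℤ) : ℝ)) = Pr.mulVec (fun i => ((P⁻¹.mulVec u) i : ℝ)) := by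
        rw [← cast_mulVec, Matrix.mulVec_mulVec, hPQ, Matrix.one_mulVec]
      rw [hu', MDform_conj A Pr hPrU, abs_mul, habs, one_mul]
  · rintro ⟨v, hv, rfl⟩
    refine ⟨P.mulVec v, ?_, ?_⟩
    · intro h0
      apply hv
      have : P⁻¹.mulVec (P.mulVec v) = 0 := by rw [h0]; simp
      rwa [Matrix.mulVec_mulVec, hQP, Matrix.one_mulVec] at this
    · rw [cast_mulVec, MDform_conj A Pr hPrU, abs_mul, habs, one_mul]
end

section
/- Let A be a 2×2 real matrix. Then the set of absolute values of the Markov–Davenport form of the transpose Aᵀ at nonzero integer vectors equals the corresponding set for A: { |f_{Aᵀ}(u)| : u ∈ ℤ², u ≠ 0 } = { |f_A(v)| : v ∈ ℤ², v ≠ 0 }. In particular, A and Aᵀ have the same geometric Markov number. -/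
open Matrix

lemma MDform_two {R : Type*} [CommRing R] (A : Matrix (Fin 2) (Fin 2) R)
    (v : Fin 2 → R) :
    MDform A v = A 1 0 * v 0 ^ 2 + (A 1 1 - A 0 0) * (v 0 * v 1) - A 0 1 * v 1 ^ 2 := by
  simp [MDform, Matrix.det_fin_two, Matrix.mulVec, dotProduct,
    Fin.sum_univ_two, pow_succ, pow_zero]
  ring

lemma MDform_transpose_swap (A : Matrix (Fin 2) (Fin 2) ℝ) (v : Fin 2 → ℝ) :
    MDform A.transpose ![v 1, -v 0] = - MDform A v := by
  simp [MDform_two, Matrix.transpose_apply]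
  ring

lemma swap_ne_zero (u : Fin 2 → ℤ) (hu : u ≠ 0) : (![u 1, -u 0] : Fin 2 → ℤ) ≠ 0 := by
  intro h
  apply hu
  funext i
  fin_cases i
  · have := congrFun h 1
    simpa using this
  · simpa using congrFun h 0

/-- A `2×2` real matrix and its transpose take the same set of absolute values of their
Markov–Davenport forms on nonzero integer vectors; in particular they have the same
geometric Markov number. -/
theorem MDform_values_transpose (A : Matrix (Fin 2) (Fin 2) ℝ) :
    {r : ℝ | ∃ u : Fin 2 → ℤ, u ≠ 0 ∧
        r = |MDform A.transpose (fun i => (u i : ℝ))|}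
    = {r : ℝ | ∃ v : Fin 2 → ℤ, v ≠ 0 ∧
        r = |MDform A (fun i => (v i : ℝ))|} := by
  ext r
  simp only [Set.mem_setOf_eq]
  constructor
  · rintro ⟨u, hu, rfl⟩
    refine ⟨![u 1, -u 0], swap_ne_zero u hu, ?_⟩
    have h : (fun i => ((![u 1, -u 0] : Fin 2 → ℤ) i : ℝ))
        = ![(u 1 : ℝ), -(u 0 : ℝ)] := by
      funext i; fin_cases i <;> simp
    have h2 : MDform A ![(u 1 : ℝ), -(u 0 : ℝ)]
        = - MDform A.transpose (fun i => (u i : ℝ)) := by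
      have := MDform_transpose_swap A.transpose (fun i => (u i : ℝ))
      simpa using this
    rw [h, h2, abs_neg]
  · rintro ⟨v, hv, rfl⟩
    refine ⟨![v 1, -v 0], swap_ne_zero v hv, ?_⟩
    have h : (fun i => ((![v 1, -v 0] : Fin 2 → ℤ) i : ℝ))
        = ![(v 1 : ℝ), -(v 0 : ℝ)] := by
      funext i; fin_cases i <;> simp
    rw [h, MDform_transpose_swap A (fun i => (v i : ℝ)), abs_neg]
end
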